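/- Two C² causal automorphisms of M₂ that agree on the time axis and are both orientation preserving are equal. Concretely: if F₁, F₂ : M₂ → M₂ are C², satisfy ∂₀Fᵢ = σ·∂₁Fᵢ, and F₁(s,0) = F₂(s,0) for all s, then F₁ = F₂. -/

import Mathlib

/-- Partial derivative in the first (time) coordinate. -/
noncomputable def pd0 (F : ℝ × ℝ → ℝ × ℝ) (p : ℝ × ℝ) : ℝ × ℝ :=
  deriv (fun s => F (s, p.2)) p.1

/-- Partial derivative in the second (space) coordinate. -/
noncomputable def pd1 (F : ℝ × ℝ → ℝ × ℝ) (p : ℝ × ℝ) : ℝ × ℝ :=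
  deriv (fun x => F (p.1, x)) p.2

lemma pd0_eq_fderiv (F : ℝ × ℝ → ℝ × ℝ) (hF : Differentiable ℝ F) (p : ℝ × ℝ) :
    pd0 F p = fderiv ℝ F p (1, 0) := by
  have hcurve : HasDerivAt (fun s : ℝ => (s, p.2)) ((1 : ℝ), (0 : ℝ)) p.1 :=
    (hasDerivAt_id p.1).prodMk (hasDerivAt_const p.1 p.2)
  exact ((hF p).hasFDerivAt.comp_hasDerivAt p.1 hcurve).deriv

lemma pd1_eq_fderiv (F : ℝ × ℝ → ℝ × ℝ) (hF : Differentiable ℝ F) (p : ℝ × ℝ) :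
    pd1 F p = fderiv ℝ F p (0, 1) := by
  have hcurve : HasDerivAt (fun x : ℝ => (p.1, x)) ((0 : ℝ), (1 : ℝ)) p.2 :=
    (hasDerivAt_const p.2 p.1).prodMk (hasDerivAt_id p.2)
  exact ((hF p).hasFDerivAt.comp_hasDerivAt p.2 hcurve).deriv

lemma const_dir (h : ℝ × ℝ → ℝ) (hd : Differentiable ℝ h) (c : ℝ × ℝ)
    (hc : ∀ p, fderiv ℝ h p c = 0) (p : ℝ × ℝ) (r : ℝ) :
    h (p + r • c) = h p := by
  have key : ∀ t : ℝ, HasDerivAt (fun t : ℝ => h (p + t • c)) 0 t := by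
    intro t
    have h2 : HasDerivAt (fun t : ℝ => p + t • c) c t := by
      simpa using ((hasDerivAt_id t).smul_const c).const_add p
    simpa [hc, Function.comp_def] using (hd (p + t • c)).hasFDerivAt.comp_hasDerivAt t h2
  have := is_const_of_deriv_eq_zero (f := fun t : ℝ => h (p + t • c))
    (fun t => (key t).differentiableAt) (fun t => (key t).deriv) r 0
  simpa using this

/-- Two C² M₂-holomorphic maps agreeing on the time axis are equal. -/
theorem holomorphic_eq_of_eq_on_axis (F₁ F₂ : ℝ × ℝ → ℝ × ℝ)
    (h₁ : ContDiff ℝ 2 F₁) (h₂ : ContDiff ℝ 2 F₂)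
    (hol₁ : ∀ p, pd0 F₁ p = ((pd1 F₁ p).2, (pd1 F₁ p).1))
    (hol₂ : ∀ p, pd0 F₂ p = ((pd1 F₂ p).2, (pd1 F₂ p).1))
    (haxis : ∀ s : ℝ, F₁ (s, 0) = F₂ (s, 0)) :
    F₁ = F₂ := by
  have hd₁ : Differentiable ℝ F₁ := h₁.differentiable (by norm_num)
  have hd₂ : Differentiable ℝ F₂ := h₂.differentiable (by norm_num)
  -- rewrite holonomy in terms of fderiv
  have H₁ : ∀ p, fderiv ℝ F₁ p (1, 0) =
      ((fderiv ℝ F₁ p (0, 1)).2, (fderiv ℝ F₁ p (0, 1)).1) := by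
    intro p
    rw [← pd0_eq_fderiv F₁ hd₁ p, ← pd1_eq_fderiv F₁ hd₁ p]; exact hol₁ p
  have H₂ : ∀ p, fderiv ℝ F₂ p (1, 0) =
      ((fderiv ℝ F₂ p (0, 1)).2, (fderiv ℝ F₂ p (0, 1)).1) := by
    intro p
    rw [← pd0_eq_fderiv F₂ hd₂ p, ← pd1_eq_fderiv F₂ hd₂ p]; exact hol₂ p
  set u : ℝ × ℝ → ℝ := fun p => (F₁ p).1 + (F₁ p).2 - (F₂ p).1 - (F₂ p).2 with hu_def
  set v : ℝ × ℝ → ℝ := fun p => (F₁ p).1 - (F₁ p).2 - (F₂ p).1 + (F₂ p).2 with hv_def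
  have hud : Differentiable ℝ u := ((hd₁.fst.add hd₁.snd).sub hd₂.fst).sub hd₂.snd
  have hvd : Differentiable ℝ v := ((hd₁.fst.sub hd₁.snd).sub hd₂.fst).add hd₂.snd
  have huf : ∀ p c, fderiv ℝ u p c =
      (fderiv ℝ F₁ p c).1 + (fderiv ℝ F₁ p c).2
        - (fderiv ℝ F₂ p c).1 - (fderiv ℝ F₂ p c).2 := by
    intro p c
    have h1 := (hd₁ p).hasFDerivAt
    have h2 := (hd₂ p).hasFDerivAt
    have h3 : HasFDerivAt u
        ((((ContinuousLinearMap.fst ℝ ℝ ℝ).comp (fderiv ℝ F₁ p)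
          + (ContinuousLinearMap.snd ℝ ℝ ℝ).comp (fderiv ℝ F₁ p))
          - (ContinuousLinearMap.fst ℝ ℝ ℝ).comp (fderiv ℝ F₂ p))
          - (ContinuousLinearMap.snd ℝ ℝ ℝ).comp (fderiv ℝ F₂ p)) p :=
      ((h1.fst.add h1.snd).sub h2.fst).sub h2.snd
    rw [h3.fderiv]; rfl
  have hvf : ∀ p c, fderiv ℝ v p c =
      (fderiv ℝ F₁ p c).1 - (fderiv ℝ F₁ p c).2
        - (fderiv ℝ F₂ p c).1 + (fderiv ℝ F₂ p c).2 := by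
    intro p c
    have h1 := (hd₁ p).hasFDerivAt
    have h2 := (hd₂ p).hasFDerivAt
    have h3 : HasFDerivAt v
        ((((ContinuousLinearMap.fst ℝ ℝ ℝ).comp (fderiv ℝ F₁ p)
          - (ContinuousLinearMap.snd ℝ ℝ ℝ).comp (fderiv ℝ F₁ p))
          - (ContinuousLinearMap.fst ℝ ℝ ℝ).comp (fderiv ℝ F₂ p))
          + (ContinuousLinearMap.snd ℝ ℝ ℝ).comp (fderiv ℝ F₂ p)) p :=
      ((h1.fst.sub h1.snd).sub h2.fst).add h2.snd
    rw [h3.fderiv]; rfl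
  have hsplit : ((1 : ℝ), (-1 : ℝ)) = ((1 : ℝ), (0 : ℝ)) - ((0 : ℝ), (1 : ℝ)) := by
    norm_num [Prod.ext_iff]
  have hsplit' : ((1 : ℝ), (1 : ℝ)) = ((1 : ℝ), (0 : ℝ)) + ((0 : ℝ), (1 : ℝ)) := by
    norm_num [Prod.ext_iff]
  have hu0 : ∀ p, fderiv ℝ u p ((1 : ℝ), (-1 : ℝ)) = 0 := by
    intro p
    rw [huf, hsplit]
    simp only [map_sub]
    have e1 := H₁ p
    have e2 := H₂ p
    rw [Prod.ext_iff] at e1 e2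
    obtain ⟨e11, e12⟩ := e1
    obtain ⟨e21, e22⟩ := e2
    simp only [Prod.fst_sub, Prod.snd_sub]
    linarith
  have hv0 : ∀ p, fderiv ℝ v p ((1 : ℝ), (1 : ℝ)) = 0 := by
    intro p
    rw [hvf, hsplit']
    simp only [map_add]
    have e1 := H₁ p
    have e2 := H₂ p
    rw [Prod.ext_iff] at e1 e2
    obtain ⟨e11, e12⟩ := e1
    obtain ⟨e21, e22⟩ := e2
    simp only [Prod.fst_add, Prod.snd_add]
    linarith
  have huaxis : ∀ s : ℝ, u (s, 0) = 0 := by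
    intro s; simp [hu_def, haxis s]
  have hvaxis : ∀ s : ℝ, v (s, 0) = 0 := by
    intro s; simp [hv_def, haxis s]
  funext p
  obtain ⟨t, x⟩ := p
  have hu : u (t, x) = 0 := by
    have := const_dir u hud ((1 : ℝ), (-1 : ℝ)) hu0 (t, x) x
    have hpt : ((t, x) : ℝ × ℝ) + x • ((1 : ℝ), (-1 : ℝ)) = (t + x, 0) := by
      simp [Prod.ext_iff] <;> ring
    rw [hpt, huaxis] at this
    exact this.symm
  have hv : v (t, x) = 0 := by
    have := const_dir v hvd ((1 : ℝ), (1 : ℝ)) hv0 (t, x) (-x)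
    have hpt : ((t, x) : ℝ × ℝ) + (-x) • ((1 : ℝ), (1 : ℝ)) = (t - x, 0) := by
      simp [Prod.ext_iff] <;> ring
    rw [hpt, hvaxis] at this
    exact this.symm
  simp only [hu_def, hv_def] at hu hv
  have h1 : (F₁ (t, x)).1 = (F₂ (t, x)).1 := by linarith
  have h2 : (F₁ (t, x)).2 = (F₂ (t, x)).2 := by linarith
  exact Prod.ext h1 h2
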